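/- Let φ : ℝ → ℝ be a continuous bijection and f : ℝ → ℂ a continuous function vanishing at infinity, f not identically 0, such that f ∘ φ = λ·f. Suppose that for every t ∈ ℝ both (φₙ(t))ₙ and ((φ⁻¹)ₙ(t))ₙ converge in the extended reals. Then λ = 1. -/

import Mathlib

open Filter

lemma conv_of_ereal_aux (f : ℝ → ℂ) (hf : Continuous f)
    (hvan : Filter.Tendsto f (Filter.cocompact ℝ) (nhds 0))
    (x : ℕ → ℝ) (L : EReal)
    (hx : Filter.Tendsto (fun n => ((x n : ℝ) : EReal)) Filter.atTop (nhds L)) :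
    ∃ c : ℂ, Filter.Tendsto (fun n => f (x n)) Filter.atTop (nhds c) := by
  induction L using EReal.rec with
  | coe a =>
    exact ⟨f a, (hf.tendsto a).comp (EReal.tendsto_coe.mp hx)⟩
  | top =>
    refine ⟨0, hvan.comp ?_⟩
    have hx' : Filter.Tendsto x Filter.atTop Filter.atTop := by
      rw [tendsto_atTop]
      intro b
      have := (EReal.tendsto_nhds_top_iff_real.mp hx) b
      filter_upwards [this] with n hn
      exact le_of_lt (EReal.coe_lt_coe_iff.mp hn)
    rw [cocompact_eq_atBot_atTop]
    exact hx'.mono_right le_sup_right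
  | bot =>
    refine ⟨0, hvan.comp ?_⟩
    have hx' : Filter.Tendsto x Filter.atTop Filter.atBot := by
      rw [tendsto_atBot]
      intro b
      have := (EReal.tendsto_nhds_bot_iff_real.mp hx) b
      filter_upwards [this] with n hn
      exact le_of_lt (EReal.coe_lt_coe_iff.mp hn)
    rw [cocompact_eq_atBot_atTop]
    exact hx'.mono_right le_sup_left

theorem stmt_15 (φ ψ : ℝ → ℝ) (hc : Continuous φ) (hbij : Function.Bijective φ)
    (hψ1 : ∀ x, φ (ψ x) = x) (hψ2 : ∀ x, ψ (φ x) = x)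
    (f : ℝ → ℂ) (hf : Continuous f)
    (hvan : Filter.Tendsto f (Filter.cocompact ℝ) (nhds 0))
    (hne : f ≠ 0) (l : ℂ) (heig : ∀ x, f (φ x) = l * f x)
    (hconv : ∀ t : ℝ, (∃ L : EReal, Filter.Tendsto (fun n : ℕ => ((φ^[n] t : ℝ) : EReal))
        Filter.atTop (nhds L)) ∧
      (∃ L : EReal, Filter.Tendsto (fun n : ℕ => ((ψ^[n] t : ℝ) : EReal))
        Filter.atTop (nhds L))) :
    l = 1 := by
  obtain ⟨t, ht⟩ : ∃ t, f t ≠ 0 := by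
    by_contra h
    push_neg at h
    exact hne (funext h)
  have hu : ∀ (n : ℕ) (x : ℝ), f (φ^[n] x) = l ^ n * f x := by
    intro n
    induction n with
    | zero => intro x; simp
    | succ n ih =>
      intro x
      rw [Function.iterate_succ_apply', heig, ih, pow_succ]
      ring
  have hphipsi : ∀ (n : ℕ) (x : ℝ), φ^[n] (ψ^[n] x) = x := by
    intro n
    induction n with
    | zero => intro x; simp
    | succ n ih =>
      intro x
      rw [Function.iterate_succ_apply ψ, Function.iterate_succ_apply' φ, ih, hψ1]
  have hv : ∀ n : ℕ, l ^ n * f (ψ^[n] t) = f t := by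
    intro n
    rw [← hu n (ψ^[n] t), hphipsi]
  obtain ⟨L₁, hL₁⟩ := (hconv t).1
  obtain ⟨L₂, hL₂⟩ := (hconv t).2
  obtain ⟨c, hcu⟩ := conv_of_ereal_aux f hf hvan _ _ hL₁
  obtain ⟨c', hcv⟩ := conv_of_ereal_aux f hf hvan _ _ hL₂
  have hprod : Filter.Tendsto (fun n => f (φ^[n] t) * f (ψ^[n] t))
      Filter.atTop (nhds (c * c')) := hcu.mul hcv
  have hconst : (fun n : ℕ => f (φ^[n] t) * f (ψ^[n] t)) = fun _ => f t * f t := by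
    funext n
    rw [hu n t, mul_comm (l ^ n) (f t), mul_assoc, hv n]
  rw [hconst] at hprod
  have hcc' : c * c' = f t * f t := tendsto_nhds_unique hprod tendsto_const_nhds
  have hc : c ≠ 0 := by
    intro h
    rw [h, zero_mul] at hcc'
    exact ht (mul_self_eq_zero.mp hcc'.symm)
  have hshift : Filter.Tendsto (fun n : ℕ => f (φ^[n + 1] t)) Filter.atTop (nhds c) :=
    hcu.comp (Filter.tendsto_add_atTop_nat 1)
  have hshift2 : (fun n : ℕ => f (φ^[n + 1] t)) = fun n => l * f (φ^[n] t) := by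
    funext n
    rw [Function.iterate_succ_apply', heig]
  rw [hshift2] at hshift
  have hlc : Filter.Tendsto (fun n : ℕ => l * f (φ^[n] t)) Filter.atTop (nhds (l * c)) :=
    hcu.const_mul l
  have : l * c = c := tendsto_nhds_unique hlc hshift
  have := mul_right_cancel₀ hc (by rw [this, one_mul] : l * c = 1 * c)
  exact this
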